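/- Let K and L be star bodies in ℝⁿ (n ≥ 2) with radial functions ρ_K, ρ_L : S^{n-1} → (0,∞), and let f : ℝⁿ → [0,∞) be continuous. Suppose ∫_{S^{n-1}} ρ_K(x)·(∫₀^{ρ_K(x)} t^{n-2} f(tx) dt) dσ(x) ≤ ∫_{S^{n-1}} ρ_K(x)·(∫₀^{ρ_L(x)} t^{n-2} f(tx) dt) dσ(x) + C for some constant C ≥ 0. Then ∫_{S^{n-1}} (∫₀^{ρ_K(x)} t^{n-1} f(tx) dt) dσ(x) ≤ ∫_{S^{n-1}} (∫₀^{ρ_L(x)} t^{n-1} f(tx) dt) dσ(x) + C. -/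

import Mathlib

open MeasureTheory Metric Set

private lemma key_ineq (n : ℕ) (hn : 2 ≤ n) (α : ℝ → ℝ) (hα : Continuous α)
    (hα0 : ∀ t, 0 ≤ α t) (a b : ℝ) (ha : 0 < a) (hb : 0 < b) :
    (∫ t in Ioc (0 : ℝ) a, t ^ (n - 1) * α t) -
      a * ∫ t in Ioc (0 : ℝ) a, t ^ (n - 2) * α t ≤
    (∫ t in Ioc (0 : ℝ) b, t ^ (n - 1) * α t) -
      a * ∫ t in Ioc (0 : ℝ) b, t ^ (n - 2) * α t := by
  have hc1 : Continuous fun t : ℝ => t ^ (n - 1) * α t := by fun_prop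
  have hc2 : Continuous fun t : ℝ => t ^ (n - 2) * α t := by fun_prop
  have e1 : ∀ c : ℝ, 0 < c → (∫ t in Ioc (0 : ℝ) c, t ^ (n - 1) * α t)
      = ∫ t in (0 : ℝ)..c, t ^ (n - 1) * α t := fun c hc =>
    (intervalIntegral.integral_of_le hc.le).symm
  have e2 : ∀ c : ℝ, 0 < c → (∫ t in Ioc (0 : ℝ) c, t ^ (n - 2) * α t)
      = ∫ t in (0 : ℝ)..c, t ^ (n - 2) * α t := fun c hc =>
    (intervalIntegral.integral_of_le hc.le).symm
  rw [e1 a ha, e1 b hb, e2 a ha, e2 b hb]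
  have hsub1 : (∫ t in (0:ℝ)..b, t ^ (n - 1) * α t) - (∫ t in (0:ℝ)..a, t ^ (n - 1) * α t)
      = ∫ t in a..b, t ^ (n - 1) * α t :=
    intervalIntegral.integral_interval_sub_left (hc1.intervalIntegrable _ _)
      (hc1.intervalIntegrable _ _)
  have hsub2 : (∫ t in (0:ℝ)..b, t ^ (n - 2) * α t) - (∫ t in (0:ℝ)..a, t ^ (n - 2) * α t)
      = ∫ t in a..b, t ^ (n - 2) * α t :=
    intervalIntegral.integral_interval_sub_left (hc2.intervalIntegrable _ _)
      (hc2.intervalIntegrable _ _)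
  -- key positivity
  have hpow : ∀ t : ℝ, t ^ (n - 1) = t ^ (n - 2) * t := by
    intro t
    have : n - 1 = (n - 2) + 1 := by omega
    rw [this, pow_succ]
  have key : 0 ≤ ∫ t in a..b, (t ^ (n - 1) - a * t ^ (n - 2)) * α t := by
    rcases le_total a b with hab | hab
    · refine intervalIntegral.integral_nonneg hab fun u hu => ?_
      have hu0 : 0 < u := lt_of_lt_of_le ha hu.1
      have : 0 ≤ u ^ (n - 1) - a * u ^ (n - 2) := by
        rw [hpow u]
        have : a * u ^ (n - 2) ≤ u * u ^ (n - 2) := by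
          apply mul_le_mul_of_nonneg_right hu.1 (by positivity)
        nlinarith
      exact mul_nonneg this (hα0 u)
    · rw [intervalIntegral.integral_symm]
      have : (∫ t in b..a, (t ^ (n - 1) - a * t ^ (n - 2)) * α t) ≤ 0 := by
        have h0 : 0 ≤ ∫ t in b..a, -((t ^ (n - 1) - a * t ^ (n - 2)) * α t) := by
          refine intervalIntegral.integral_nonneg hab fun u hu => ?_
          have hu0 : 0 < u := lt_of_lt_of_le hb hu.1
          have h1 : u ^ (n - 1) - a * u ^ (n - 2) ≤ 0 := by
            rw [hpow u]
            have : u * u ^ (n - 2) ≤ a * u ^ (n - 2) := by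
              apply mul_le_mul_of_nonneg_right hu.2 (by positivity)
            nlinarith
          have := mul_nonpos_of_nonpos_of_nonneg h1 (hα0 u)
          linarith
        rw [intervalIntegral.integral_neg] at h0
        linarith
      linarith
  have hexp : (∫ t in a..b, (t ^ (n - 1) - a * t ^ (n - 2)) * α t)
      = (∫ t in a..b, t ^ (n - 1) * α t) - a * ∫ t in a..b, t ^ (n - 2) * α t := by
    rw [← intervalIntegral.integral_const_mul, ← intervalIntegral.integral_sub
      (hc1.intervalIntegrable _ _) ((continuous_const.mul hc2).intervalIntegrable _ _) (g := fun t : ℝ => a * (t ^ (n - 2) * α t))]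
    congr 1
    funext t
    ring
  rw [hexp, ← hsub1, ← hsub2] at key
  nlinarith [key]

/-- Zvavitch's key step for star bodies with radial functions `ρK, ρL` and a
continuous nonnegative density `f`: if
`∫_{S^{n-1}} ρK(x)·(∫₀^{ρK(x)} t^{n-2} f(tx) dt) dσ ≤
 ∫_{S^{n-1}} ρK(x)·(∫₀^{ρL(x)} t^{n-2} f(tx) dt) dσ + C`, then
`∫_{S^{n-1}} ∫₀^{ρK(x)} t^{n-1} f(tx) dt dσ ≤
 ∫_{S^{n-1}} ∫₀^{ρL(x)} t^{n-1} f(tx) dt dσ + C`. -/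
theorem stmt_12 (n : ℕ) (hn : 2 ≤ n)
    (ρK ρL : sphere (0 : EuclideanSpace ℝ (Fin n)) 1 → ℝ)
    (hρK : Continuous ρK) (hρL : Continuous ρL)
    (hρKpos : ∀ x, 0 < ρK x) (hρLpos : ∀ x, 0 < ρL x)
    (f : EuclideanSpace ℝ (Fin n) → ℝ) (hf : Continuous f) (hf0 : ∀ x, 0 ≤ f x)
    (C : ℝ) (hC : 0 ≤ C)
    (hyp : (∫ x : sphere (0 : EuclideanSpace ℝ (Fin n)) 1,
        ρK x * ∫ t in Ioc (0 : ℝ) (ρK x),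
          t ^ (n - 2) * f (t • (x : EuclideanSpace ℝ (Fin n))) ∂volume
        ∂(volume.toSphere)) ≤
      (∫ x : sphere (0 : EuclideanSpace ℝ (Fin n)) 1,
        ρK x * ∫ t in Ioc (0 : ℝ) (ρL x),
          t ^ (n - 2) * f (t • (x : EuclideanSpace ℝ (Fin n))) ∂volume
        ∂(volume.toSphere)) + C) :
    (∫ x : sphere (0 : EuclideanSpace ℝ (Fin n)) 1,
        (∫ t in Ioc (0 : ℝ) (ρK x),
          t ^ (n - 1) * f (t • (x : EuclideanSpace ℝ (Fin n))) ∂volume)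
        ∂(volume.toSphere)) ≤
      (∫ x : sphere (0 : EuclideanSpace ℝ (Fin n)) 1,
        (∫ t in Ioc (0 : ℝ) (ρL x),
          t ^ (n - 1) * f (t • (x : EuclideanSpace ℝ (Fin n))) ∂volume)
        ∂(volume.toSphere)) + C := by
  -- continuity of parametric integrals
  have hcont : ∀ (k : ℕ) (ρ : sphere (0 : EuclideanSpace ℝ (Fin n)) 1 → ℝ), Continuous ρ → (∀ x, 0 < ρ x) →
      Continuous fun x : sphere (0 : EuclideanSpace ℝ (Fin n)) 1 => ∫ t in Ioc (0 : ℝ) (ρ x),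
        t ^ k * f (t • (x : EuclideanSpace ℝ (Fin n))) ∂volume := by
    intro k ρ hρ hρpos
    have hF : Continuous (Function.uncurry fun (x : sphere (0 : EuclideanSpace ℝ (Fin n)) 1) (t : ℝ) =>
        t ^ k * f (t • (x : EuclideanSpace ℝ (Fin n)))) := by
      apply Continuous.mul
      · exact (continuous_snd.pow k)
      · exact hf.comp (continuous_snd.smul (continuous_subtype_val.comp continuous_fst))
    have hG : Continuous fun x : sphere (0 : EuclideanSpace ℝ (Fin n)) 1 => ∫ t in (0 : ℝ)..(ρ x),
        t ^ k * f (t • (x : EuclideanSpace ℝ (Fin n))) ∂volume :=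
      intervalIntegral.continuous_parametric_intervalIntegral_of_continuous hF hρ
    convert hG using 1
    funext x
    exact (intervalIntegral.integral_of_le (hρpos x).le).symm
  have int_of_cont : ∀ g : sphere (0 : EuclideanSpace ℝ (Fin n)) 1 → ℝ, Continuous g → Integrable g volume.toSphere := by
    intro g hg
    exact hg.integrable_of_hasCompactSupport (HasCompactSupport.of_compactSpace g)
  set F1 : sphere (0 : EuclideanSpace ℝ (Fin n)) 1 → ℝ := fun x => ∫ t in Ioc (0 : ℝ) (ρK x),
    t ^ (n - 1) * f (t • (x : EuclideanSpace ℝ (Fin n))) ∂volume with hF1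
  set F2 : sphere (0 : EuclideanSpace ℝ (Fin n)) 1 → ℝ := fun x => ∫ t in Ioc (0 : ℝ) (ρL x),
    t ^ (n - 1) * f (t • (x : EuclideanSpace ℝ (Fin n))) ∂volume with hF2
  set G1 : sphere (0 : EuclideanSpace ℝ (Fin n)) 1 → ℝ := fun x => ρK x * ∫ t in Ioc (0 : ℝ) (ρK x),
    t ^ (n - 2) * f (t • (x : EuclideanSpace ℝ (Fin n))) ∂volume with hG1
  set G2 : sphere (0 : EuclideanSpace ℝ (Fin n)) 1 → ℝ := fun x => ρK x * ∫ t in Ioc (0 : ℝ) (ρL x),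
    t ^ (n - 2) * f (t • (x : EuclideanSpace ℝ (Fin n))) ∂volume with hG2
  have hF1c : Continuous F1 := hcont (n - 1) ρK hρK hρKpos
  have hF2c : Continuous F2 := hcont (n - 1) ρL hρL hρLpos
  have hG1c : Continuous G1 := hρK.mul (hcont (n - 2) ρK hρK hρKpos)
  have hG2c : Continuous G2 := hρK.mul (hcont (n - 2) ρL hρL hρLpos)
  have ptwise : ∀ x : sphere (0 : EuclideanSpace ℝ (Fin n)) 1, F1 x + G2 x ≤ F2 x + G1 x := by
    intro x
    have := key_ineq n hn (fun t => f (t • (x : EuclideanSpace ℝ (Fin n))))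
      (hf.comp (continuous_id.smul continuous_const))
      (fun t => hf0 _) (ρK x) (ρL x) (hρKpos x) (hρLpos x)
    simp only [hF1, hF2, hG1, hG2]
    nlinarith [this]
  have hmono : (∫ x : sphere (0 : EuclideanSpace ℝ (Fin n)) 1, (F1 x + G2 x) ∂volume.toSphere) ≤
      ∫ x : sphere (0 : EuclideanSpace ℝ (Fin n)) 1, (F2 x + G1 x) ∂volume.toSphere :=
    integral_mono ((int_of_cont F1 hF1c).add (int_of_cont G2 hG2c))
      ((int_of_cont F2 hF2c).add (int_of_cont G1 hG1c)) ptwise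
  rw [integral_add (int_of_cont F1 hF1c) (int_of_cont G2 hG2c),
    integral_add (int_of_cont F2 hF2c) (int_of_cont G1 hG1c)] at hmono
  have hyp' : (∫ x : sphere (0 : EuclideanSpace ℝ (Fin n)) 1, G1 x ∂volume.toSphere) ≤ (∫ x : sphere (0 : EuclideanSpace ℝ (Fin n)) 1, G2 x ∂volume.toSphere) + C := hyp
  show (∫ x : sphere (0 : EuclideanSpace ℝ (Fin n)) 1, F1 x ∂volume.toSphere) ≤ (∫ x : sphere (0 : EuclideanSpace ℝ (Fin n)) 1, F2 x ∂volume.toSphere) + C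
  linarith
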